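/- (Converse of the theorem on sign changes, circle case) Let n be odd and let f₁, …, f_n be continuous 2π-periodic functions forming a Chebyshev system of order n on the circle. Let f : ℝ → ℝ be continuous and 2π-periodic and suppose f changes sign at least n+1 times per period. Then there exists a continuous 2π-periodic function ρ : ℝ → ℝ with ρ ≥ 0 and f·ρ not identically zero such that ∫_0^{2π} f(x)·f_j(x)·ρ(x) dx = 0 for every j = 1, …, n. -/

import Mathlib

lemma cos_gt_exists_int (ε u : ℝ) (hε : 0 < ε) (hεπ : ε ≤ Real.pi)
    (h : Real.cos ε < Real.cos u) : ∃ k : ℤ, |u - (k : ℝ) * (2 * Real.pi)| < ε := by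
  have hπ := Real.pi_pos
  refine ⟨round (u / (2 * Real.pi)), ?_⟩
  set k := round (u / (2 * Real.pi)) with hk
  have h2π : (0:ℝ) < 2 * Real.pi := by positivity
  have h1 : |u / (2 * Real.pi) - k| ≤ 1 / 2 := abs_sub_round _
  have h2 : |u - (k:ℝ) * (2 * Real.pi)| ≤ Real.pi := by
    have heq : u - (k:ℝ) * (2 * Real.pi) = (u / (2 * Real.pi) - k) * (2 * Real.pi) := by
      field_simp
    rw [heq, abs_mul, abs_of_pos h2π]
    nlinarith [abs_nonneg (u / (2 * Real.pi) - (k:ℝ))]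
  have hcos : Real.cos u = Real.cos (u - (k:ℝ) * (2 * Real.pi)) := by
    conv_lhs => rw [show u = (u - (k:ℝ) * (2 * Real.pi)) + (k:ℝ) * (2 * Real.pi) by ring]
    exact Real.cos_add_int_mul_two_pi _ k
  by_contra hcon
  push_neg at hcon
  have hmono : Real.cos |u - (k:ℝ) * (2 * Real.pi)| ≤ Real.cos ε :=
    Real.cos_le_cos_of_nonneg_of_le_pi hε.le h2 hcon
  rw [Real.cos_abs, ← hcos] at hmono
  linarith

set_option maxHeartbeats 2000000 in
theorem exists_weight_orthogonal_of_sign_changes_circle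
    (n : ℕ) (hodd : Odd n) (F : Fin n → ℝ → ℝ)
    (hFc : ∀ j, Continuous (F j))
    (hFper : ∀ j, Function.Periodic (F j) (2 * Real.pi))
    (hcheb : ∀ c : Fin n → ℝ, c ≠ 0 →
      {x ∈ Set.Ico 0 (2 * Real.pi) | ∑ j, c j * F j x = 0}.encard ≤ (n - 1 : ℕ))
    (f : ℝ → ℝ) (hfc : Continuous f) (hfper : Function.Periodic f (2 * Real.pi))
    (hsign : ∃ t : Fin (n + 1) → ℝ, StrictMono t ∧
      (∀ i, t i ∈ Set.Ico 0 (2 * Real.pi)) ∧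
      (∀ i : Fin n, f (t i.castSucc) * f (t i.succ) < 0) ∧
      f (t (Fin.last n)) * f (t 0) < 0) :
    ∃ ρ : ℝ → ℝ, Continuous ρ ∧ Function.Periodic ρ (2 * Real.pi) ∧ (∀ x, 0 ≤ ρ x) ∧
      (∃ x, f x * ρ x ≠ 0) ∧
      ∀ j, ∫ x in (0:ℝ)..(2 * Real.pi), f x * F j x * ρ x = 0 := by
  obtain ⟨t, htmono, htmem, htalt, -⟩ := hsign
  have hπ : 0 < Real.pi := Real.pi_pos
  have hn1 : 1 ≤ n := hodd.pos
  haveI : Nonempty (Fin n) := ⟨⟨0, hn1⟩⟩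
  have htlast : t (Fin.last n) < 2 * Real.pi := (htmem _).2
  have ht0 : 0 ≤ t 0 := (htmem 0).1
  -- f is nonzero at each t i
  have hftne : ∀ i : Fin (n + 1), f (t i) ≠ 0 := by
    intro i
    by_cases h : i.val < n
    · have halt := htalt ⟨i.val, h⟩
      have hcast : (⟨i.val, h⟩ : Fin n).castSucc = i := by ext; simp
      rw [hcast] at halt
      intro hf; rw [hf, zero_mul] at halt; exact lt_irrefl 0 halt
    · have hival : i = Fin.last n := by
        ext; simp only [Fin.val_last]; omega
      have halt := htalt ⟨n - 1, by omega⟩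
      have hsucc : (⟨n - 1, by omega⟩ : Fin n).succ = Fin.last n := by
        ext; simp [Fin.val_last]; omega
      rw [hsucc] at halt
      rw [hival]
      intro hf; rw [hf, mul_zero] at halt; exact lt_irrefl 0 halt
  -- sign neighborhoods
  have hδ : ∀ i : Fin (n + 1), ∃ d > 0, ∀ x, |x - t i| < d → 0 < f x * f (t i) := by
    intro i
    have hpos : 0 < f (t i) * f (t i) := mul_self_pos.2 (hftne i)
    have hcont : Continuous fun x => f x * f (t i) := hfc.mul continuous_const
    have hnb : (fun x => f x * f (t i)) ⁻¹' Set.Ioi 0 ∈ nhds (t i) :=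
      hcont.continuousAt.preimage_mem_nhds (Ioi_mem_nhds hpos)
    rcases Metric.mem_nhds_iff.1 hnb with ⟨d, hd, hball⟩
    exact ⟨d, hd, fun x hx => hball (by rwa [Metric.mem_ball, Real.dist_eq])⟩
  choose δ hδpos hδsign using hδ
  -- choice of ε
  set ε : ℝ := min (min Real.pi ((2 * Real.pi - t (Fin.last n)) / 2))
      (min ((Finset.univ : Finset (Fin (n + 1))).inf' Finset.univ_nonempty δ)
        ((Finset.univ : Finset (Fin n)).inf' Finset.univ_nonempty
          (fun i => (t i.succ - t i.castSucc) / 2))) with hεdef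
  have hε : 0 < ε := by
    refine lt_min (lt_min hπ (by linarith)) (lt_min ?_ ?_)
    · exact (Finset.lt_inf'_iff _).2 fun i _ => hδpos i
    · exact (Finset.lt_inf'_iff _).2 fun i _ => by
        have := htmono (Fin.castSucc_lt_succ (i := i)); linarith
  have hεπ : ε ≤ Real.pi := (min_le_left _ _).trans (min_le_left _ _)
  have hεlast : ε ≤ (2 * Real.pi - t (Fin.last n)) / 2 :=
    (min_le_left _ _).trans (min_le_right _ _)
  have hεδ : ∀ i, ε ≤ δ i := fun i =>
    (min_le_right _ _).trans ((min_le_left _ _).trans (Finset.inf'_le _ (Finset.mem_univ i)))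
  have hεgap : ∀ i : Fin n, ε ≤ (t i.succ - t i.castSucc) / 2 := fun i =>
    (min_le_right _ _).trans ((min_le_right _ _).trans (Finset.inf'_le _ (Finset.mem_univ i)))
  -- bump functions
  set φ : Fin (n + 1) → ℝ → ℝ := fun i x => max 0 (Real.cos (x - t i) - Real.cos ε) with hφdef
  have hφc : ∀ i, Continuous (φ i) :=
    fun i => continuous_const.max ((Real.continuous_cos.comp (continuous_id.sub continuous_const)).sub continuous_const)
  have hφnn : ∀ i x, 0 ≤ φ i x := fun i x => le_max_left _ _
  have hφper : ∀ i, Function.Periodic (φ i) (2 * Real.pi) := by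
    intro i x
    simp only [hφdef]
    rw [show x + 2 * Real.pi - t i = (x - t i) + 2 * Real.pi by ring, Real.cos_add_two_pi]
  have hφpos : ∀ i, 0 < φ i (t i) := by
    intro i
    have : Real.cos ε < 1 := by
      have := Real.cos_lt_cos_of_nonneg_of_le_pi le_rfl hεπ hε
      rwa [Real.cos_zero] at this
    simp only [hφdef, sub_self, Real.cos_zero]
    exact lt_max_of_lt_right (by linarith)
  have hφsupp : ∀ i x, 0 < φ i x → ∃ k : ℤ, |x - t i - (k : ℝ) * (2 * Real.pi)| < ε := by
    intro i x hx
    have hcos : Real.cos ε < Real.cos (x - t i) := by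
      by_contra hcc
      push_neg at hcc
      have : φ i x = 0 := max_eq_left (by linarith)
      rw [this] at hx; exact lt_irrefl 0 hx
    obtain ⟨k, hk⟩ := cos_gt_exists_int ε (x - t i) hε hεπ hcos
    exact ⟨k, hk⟩
  -- the vectors
  have hInt : ∀ (j : Fin n) (i : Fin (n + 1)),
      IntervalIntegrable (fun x => f x * F j x * φ i x) MeasureTheory.volume 0 (2 * Real.pi) :=
    fun j i => ((hfc.mul (hFc j)).mul (hφc i)).intervalIntegrable _ _
  set v : Fin (n + 1) → Fin n → ℝ :=
    fun i j => ∫ x in (0:ℝ)..(2 * Real.pi), f x * F j x * φ i x with hvdef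
  set T : (Fin (n + 1) → ℝ) → (Fin n → ℝ) := fun l => ∑ i, l i • v i with hTdef
  set K : Set (Fin n → ℝ) := T '' stdSimplex ℝ (Fin (n + 1)) with hKdef
  by_cases h0 : (0 : Fin n → ℝ) ∈ K
  · -- success: build ρ
    obtain ⟨l, ⟨hlnn, hlsum⟩, hl0⟩ := h0
    refine ⟨fun x => ∑ i, l i * φ i x, ?_, ?_, ?_, ?_, ?_⟩
    · exact continuous_finset_sum _ fun i _ => continuous_const.mul (hφc i)
    · intro x
      exact Finset.sum_congr rfl fun i _ => by rw [hφper i x]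
    · intro x
      exact Finset.sum_nonneg fun i _ => mul_nonneg (hlnn i) (hφnn i x)
    · have hex : ∃ i, 0 < l i := by
        by_contra hno
        push_neg at hno
        have : (1:ℝ) ≤ 0 := hlsum ▸ Finset.sum_nonpos fun i _ => hno i
        linarith
      obtain ⟨i, hli⟩ := hex
      refine ⟨t i, ?_⟩
      have h1 : l i * φ i (t i) ≤ ∑ k, l k * φ k (t i) :=
        Finset.single_le_sum (f := fun k => l k * φ k (t i))
          (fun k _ => mul_nonneg (hlnn k) (hφnn k _)) (Finset.mem_univ i)
      have h2 : 0 < l i * φ i (t i) := mul_pos hli (hφpos i)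
      exact mul_ne_zero (hftne i) (ne_of_gt (lt_of_lt_of_le h2 h1))
    · intro j
      have heq : (fun x => f x * F j x * (∑ i, l i * φ i x))
          = fun x => ∑ i, l i * (f x * F j x * φ i x) := by
        funext x
        rw [Finset.mul_sum]
        exact Finset.sum_congr rfl fun i _ => by ring
      calc ∫ x in (0:ℝ)..(2 * Real.pi), f x * F j x * (∑ i, l i * φ i x)
          = ∫ x in (0:ℝ)..(2 * Real.pi), ∑ i, l i * (f x * F j x * φ i x) := by rw [heq]
        _ = ∑ i, ∫ x in (0:ℝ)..(2 * Real.pi), l i * (f x * F j x * φ i x) :=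
            intervalIntegral.integral_finset_sum fun i _ => (hInt j i).const_mul (l i)
        _ = ∑ i, l i * v i j := by
            refine Finset.sum_congr rfl fun i _ => ?_
            rw [intervalIntegral.integral_const_mul]
        _ = T l j := by
            simp only [hTdef, Finset.sum_apply, Pi.smul_apply, smul_eq_mul]
        _ = 0 := by rw [hl0]; rfl
  · -- contradiction branch
    exfalso
    have hKconv : Convex ℝ K := by
      refine (convex_stdSimplex ℝ _).is_linear_image ⟨?_, ?_⟩
      · intro a b
        simp only [hTdef, Pi.add_apply, add_smul, Finset.sum_add_distrib]
      · intro c a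
        simp only [hTdef, Pi.smul_apply, smul_eq_mul, mul_smul, ← Finset.smul_sum]
    have hTcont : Continuous T := by
      exact continuous_finset_sum _ fun i _ => (continuous_apply i).smul continuous_const
    have hKcomp : IsCompact K := (isCompact_stdSimplex _ _).image hTcont
    obtain ⟨c, u, hcu, hK⟩ := geometric_hahn_banach_point_closed hKconv hKcomp.isClosed h0
    have hu : 0 < u := by simpa using hcu
    set cv : Fin n → ℝ := fun j => c (Pi.single j 1) with hcvdef
    have hceval : ∀ y : Fin n → ℝ, c y = ∑ j, y j * cv j := by
      intro y
      conv_lhs => rw [pi_eq_sum_univ y, map_sum]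
      refine Finset.sum_congr rfl fun j _ => ?_
      rw [map_smul, smul_eq_mul, hcvdef]
      congr 1
      congr 1
      funext k
      simp [Pi.single_apply, eq_comm]
    have hvK : ∀ i, v i ∈ K := by
      intro i
      refine ⟨Pi.single i 1, ⟨?_, ?_⟩, ?_⟩
      · intro k
        classical
        rcases eq_or_ne k i with rfl | hk
        · simp
        · simp [Pi.single_apply, hk]
      · simp
      · simp only [hTdef]
        rw [Finset.sum_eq_single i]
        · simp
        · intro k _ hk
          simp [Pi.single_apply, hk]
        · intro hk
          exact absurd (Finset.mem_univ i) hk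
    set g : ℝ → ℝ := fun x => ∑ j, cv j * F j x with hgdef
    have hgc : Continuous g := continuous_finset_sum _ fun j _ => continuous_const.mul (hFc j)
    have hgper : Function.Periodic g (2 * Real.pi) := by
      intro x
      exact Finset.sum_congr rfl fun j _ => by rw [hFper j x]
    have hgi : ∀ i, 0 < ∫ x in (0:ℝ)..(2 * Real.pi), f x * g x * φ i x := by
      intro i
      have h1 : u < c (v i) := hK _ (hvK i)
      have h2 : c (v i) = ∫ x in (0:ℝ)..(2 * Real.pi), f x * g x * φ i x := by
        rw [hceval]
        have hterm : ∀ j : Fin n, v i j * cv j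
            = ∫ x in (0:ℝ)..(2 * Real.pi), cv j * (f x * F j x * φ i x) := by
          intro j
          rw [intervalIntegral.integral_const_mul, mul_comm]
        rw [Finset.sum_congr rfl fun j _ => hterm j,
          ← intervalIntegral.integral_finset_sum fun j _ => (hInt j i).const_mul (cv j)]
        congr 1
        funext x
        rw [show f x * g x * φ i x = (∑ j, cv j * F j x) * (f x * φ i x) by
          simp only [hgdef]; ring, Finset.sum_mul]
        exact Finset.sum_congr rfl fun j _ => by ring
      linarith
    -- find points near t i where g has the sign of f (t i)
    have hxex : ∀ i : Fin (n + 1), ∃ x, |x - t i| < ε ∧ 0 < f (t i) * g x := by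
      intro i
      have hnot : ¬ ∀ y ∈ Set.Icc (0:ℝ) (2 * Real.pi), f y * g y * φ i y ≤ 0 := by
        intro hall
        have hneg : (0:ℝ) ≤ ∫ x in (0:ℝ)..(2 * Real.pi), -(f x * g x * φ i x) :=
          intervalIntegral.integral_nonneg (by linarith) fun y hy => neg_nonneg.2 (hall y hy)
        rw [intervalIntegral.integral_neg] at hneg
        linarith [hgi i]
      push_neg at hnot
      obtain ⟨y, hy, hyp⟩ := hnot
      have hφy : 0 < φ i y := by
        rcases (hφnn i y).lt_or_eq with h | h
        · exact h
        · exfalso; rw [← h, mul_zero] at hyp; exact lt_irrefl 0 hyp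
      have hfg : 0 < f y * g y := by
        by_contra hc
        push_neg at hc
        have : f y * g y * φ i y ≤ 0 := mul_nonpos_of_nonpos_of_nonneg hc (hφnn i y)
        linarith
      obtain ⟨k, hk⟩ := hφsupp i y hφy
      refine ⟨y - (k:ℝ) * (2 * Real.pi), by convert hk using 2; ring, ?_⟩
      have hfy : f (y - (k:ℝ) * (2 * Real.pi)) = f y := hfper.sub_int_mul_eq k
      have hgy : g (y - (k:ℝ) * (2 * Real.pi)) = g y := hgper.sub_int_mul_eq k
      have hsignx : 0 < f (y - (k:ℝ) * (2 * Real.pi)) * f (t i) := by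
        refine hδsign i _ (lt_of_lt_of_le ?_ (hεδ i))
        rw [show y - (k:ℝ) * (2 * Real.pi) - t i = y - t i - (k:ℝ) * (2 * Real.pi) by ring]; exact hk
      rw [hfy] at hsignx
      rw [hgy]
      nlinarith [mul_pos hfg hsignx, sq_nonneg (f y)]
    choose x hxd hxsign using hxex
    have hxmono : StrictMono x := by
      rw [Fin.strictMono_iff_lt_succ]
      intro i
      have h1 := abs_lt.1 (hxd i.castSucc)
      have h2 := abs_lt.1 (hxd i.succ)
      have h3 := hεgap i
      linarith [h1.1, h1.2, h2.1, h2.2, h3]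
    have hzex : ∀ i : Fin n, ∃ z, z ∈ Set.Ioo (x i.castSucc) (x i.succ) ∧ g z = 0 := by
      intro i
      have hgg : g (x i.castSucc) * g (x i.succ) < 0 := by
        nlinarith [mul_pos (hxsign i.castSucc) (hxsign i.succ), htalt i]
      have hle : x i.castSucc ≤ x i.succ := (hxmono (Fin.castSucc_lt_succ (i := i))).le
      rcases mul_neg_iff.1 hgg with ⟨ha, hb⟩ | ⟨ha, hb⟩
      · obtain ⟨zz, hz1, hz2⟩ := intermediate_value_Ioo' hle hgc.continuousOn
          (Set.mem_Ioo.2 ⟨hb, ha⟩)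
        exact ⟨zz, hz1, hz2⟩
      · obtain ⟨zz, hz1, hz2⟩ := intermediate_value_Ioo hle hgc.continuousOn
          (Set.mem_Ioo.2 ⟨ha, hb⟩)
        exact ⟨zz, hz1, hz2⟩
    choose z hzmem hzzero using hzex
    have hxbound : ∀ i : Fin (n + 1), t i - ε < x i ∧ x i < t i + ε := by
      intro i
      have h := abs_lt.1 (hxd i)
      constructor <;> linarith [h.1, h.2]
    have hzub : ∀ i : Fin n, z i < 2 * Real.pi - ε := by
      intro i
      have h1 : z i < x i.succ := (hzmem i).2
      have h2 : x i.succ ≤ x (Fin.last n) := hxmono.monotone (Fin.le_last _)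
      have h3 := (hxbound (Fin.last n)).2
      linarith [hεlast]
    set o : Fin n := ⟨0, hn1⟩ with hodef
    have hx1pos : 0 < x o.succ := by
      have h1 := (hxbound o.succ).1
      have h2 := hεgap o
      have h3 : t o.castSucc = t 0 := by congr 1
      have h4 : 0 ≤ t o.castSucc := by rw [h3]; exact ht0
      linarith
    have hzpos : ∀ i : Fin n, 0 < i.val → 0 < z i := by
      intro i hi
      have h1 : x o.succ ≤ x i.castSucc := by
        apply hxmono.monotone
        rw [Fin.le_def]
        simp only [Fin.val_succ, Fin.coe_castSucc, hodef]
        omega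
      have h2 := (hzmem i).1
      linarith [hx1pos]
    have hzmono : StrictMono z := by
      intro i j hij
      have h1 : z i < x i.succ := (hzmem i).2
      have h2 : x i.succ ≤ x j.castSucc := by
        apply hxmono.monotone
        rw [Fin.le_def]
        simp only [Fin.val_succ, Fin.coe_castSucc]
        have := Fin.lt_def.1 hij
        omega
      have h3 : x j.castSucc < z j := (hzmem j).1
      linarith
    have hzlb : ∀ i : Fin n, -ε < z i := by
      intro i
      linarith [(hzmem i).1, (hxbound i.castSucc).1, (htmem i.castSucc).1]
    set w : Fin n → ℝ := fun i => if z i < 0 then z i + 2 * Real.pi else z i with hwdef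
    have hcvne : cv ≠ 0 := by
      intro hcv
      have h0' := hgi 0
      have hgz : ∀ y : ℝ, g y = 0 := by
        intro y
        rw [hgdef]
        refine Finset.sum_eq_zero fun j _ => ?_
        rw [show cv j = 0 from by rw [hcv]; rfl, zero_mul]
      have heq0 : (fun y => f y * g y * φ 0 y) = fun _ => (0:ℝ) :=
        funext fun y => by rw [hgz]; ring
      rw [heq0] at h0'
      simp at h0'
    have hEle := hcheb cv hcvne
    have hwmem : ∀ i : Fin n,
        w i ∈ {x ∈ Set.Ico 0 (2 * Real.pi) | ∑ j, cv j * F j x = 0} := by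
      intro i
      have hgz : g (w i) = 0 := by
        by_cases hzi : z i < 0
        · rw [show w i = z i + 2 * Real.pi from if_pos hzi, hgper (z i)]
          exact hzzero i
        · rw [show w i = z i from if_neg hzi]
          exact hzzero i
      have hsum : (∑ j, cv j * F j (w i)) = 0 := by
        have hh : (∑ j, cv j * F j (w i)) = g (w i) := by rw [hgdef]
        rw [hh, hgz]
      refine ⟨?_, hsum⟩
      by_cases hzi : z i < 0
      · rw [show w i = z i + 2 * Real.pi from if_pos hzi]
        constructor
        · linarith [hzlb i, hεπ]
        · linarith
      · rw [show w i = z i from if_neg hzi]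
        push_neg at hzi
        exact ⟨hzi, by linarith [hzub i, hε]⟩
    have hwinj : Function.Injective w := by
      have key : ∀ i j : Fin n, i < j → w i ≠ w j := by
        intro i j hij
        have hij' : 0 < j.val := by
          have := Fin.lt_def.1 hij
          omega
        have hzj := hzpos j hij'
        have hwj : w j = z j := if_neg (not_lt.2 hzj.le)
        by_cases hzi : z i < 0
        · have hwi : w i = z i + 2 * Real.pi := if_pos hzi
          have hlt : w j < w i := by
            rw [hwi, hwj]
            linarith [hzub j, hzlb i]
          exact (ne_of_lt hlt).symm
        · have hwi : w i = z i := if_neg hzi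
          have hlt : w i < w j := by
            rw [hwi, hwj]
            exact hzmono hij
          exact ne_of_lt hlt
      intro i j hij
      rcases lt_trichotomy i j with h | h | h
      · exact absurd hij (key i j h)
      · exact h
      · exact absurd hij.symm (key j i h)
    have hgecard : (n : ℕ∞)
        ≤ {x ∈ Set.Ico 0 (2 * Real.pi) | ∑ j, cv j * F j x = 0}.encard := by
      have h1 : Set.range w ⊆ {x ∈ Set.Ico 0 (2 * Real.pi) | ∑ j, cv j * F j x = 0} :=
        Set.range_subset_iff.2 hwmem
      calc (n : ℕ∞) = (Set.univ : Set (Fin n)).encard := by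
            rw [Set.encard_univ]
            simp
        _ = (w '' Set.univ).encard := (hwinj.injOn.encard_image).symm
        _ ≤ _ := Set.encard_le_encard (by rwa [Set.image_univ])
    have hfinal : (n : ℕ∞) ≤ ((n - 1 : ℕ) : ℕ∞) := hgecard.trans hEle
    have hn' : n ≤ n - 1 := Nat.cast_le.1 hfinal
    omega
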